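/- Let E be a finite-dimensional real normed vector space and let A ⊆ E be a nonempty open convex subset with c • v ∈ A for all v ∈ A and all c > 0 (an open convex cone). If f : ℕ → E satisfies f(n) ∈ A for every n and the series Σₙ f(n) converges with sum s, then s ∈ A (a converging sum of timelike vectors is timelike). -/
import Mathlib


/-- In an open convex cone `A` of a finite-dimensional real normed space, a converging
sum of vectors of `A` (timelike vectors) again belongs to `A`. -/
theorem stmt7 {E : Type*} [NormedAddCommGroup E] [NormedSpace ℝ E] [FiniteDimensional ℝ E]
    (A : Set E) (hne : A.Nonempty) (hAo : IsOpen A) (hAc : Convex ℝ A)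
    (hcone : ∀ v ∈ A, ∀ c : ℝ, 0 < c → c • v ∈ A)
    (f : ℕ → E) (hf : ∀ n : ℕ, f n ∈ A) (s : E) (hs : HasSum f s) :
    s ∈ A := by
  -- A is closed under addition
  have hadd : ∀ x ∈ A, ∀ y ∈ A, x + y ∈ A := by
    intro x hx y hy
    have hm : (1/2 : ℝ) • x + (1/2 : ℝ) • y ∈ A :=
      hAc hx hy (by norm_num) (by norm_num) (by norm_num)
    have := hcone _ hm 2 (by norm_num)
    rwa [smul_add, smul_smul, smul_smul, (by norm_num : (2 : ℝ) * (1/2) = 1),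
      one_smul, one_smul] at this
  -- A + closure A ⊆ A
  have hclos : ∀ x ∈ A, ∀ y ∈ closure A, x + y ∈ A := by
    intro x hx y hy
    obtain ⟨ε, hε, hball⟩ := Metric.isOpen_iff.1 hAo x hx
    obtain ⟨a, ha, hay⟩ := Metric.mem_closure_iff.1 hy ε hε
    have h1 : x + y - a ∈ A := by
      apply hball
      rw [Metric.mem_ball, dist_eq_norm]
      have : x + y - a - x = -(a - y) := by abel
      rw [this, norm_neg, ← dist_eq_norm]
      rw [dist_comm]; exact hay
    have := hadd _ h1 _ ha
    rwa [sub_add_cancel] at this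
  -- the tail is in closure A
  have htail : HasSum (fun n => f (n + 1)) (s - ∑ i ∈ Finset.range 1, f i) :=
    (hasSum_nat_add_iff 1).2 (by simpa using hs)
  have hsum : ∀ n : ℕ, (∑ i ∈ Finset.range (n + 1), f (i + 1)) ∈ A := by
    intro n
    induction n with
    | zero => simpa using hf 1
    | succ k ih =>
      rw [Finset.sum_range_succ]
      exact hadd _ ih _ (hf _)
  have hcl : s - ∑ i ∈ Finset.range 1, f i ∈ closure A := by
    have ht := htail.tendsto_sum_nat
    have ht' : Filter.Tendsto (fun n => ∑ i ∈ Finset.range (n + 1), f (i + 1)) Filter.atTop (nhds (s - ∑ i ∈ Finset.range 1, f i)) := by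
      exact ht.comp (Filter.tendsto_add_atTop_nat 1)
    exact mem_closure_of_tendsto ht' (Filter.Eventually.of_forall fun n => hsum n)
  have : f 0 + (s - ∑ i ∈ Finset.range 1, f i) ∈ A := hclos _ (hf 0) _ hcl
  simpa using this
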